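/- Let E be a nontrivial finite-dimensional real inner product space, let u ∈ E be nonzero, let r > 0, and let c ∈ ℝ satisfy |c| < r·‖u‖. Then the closed spherical cap {v ∈ E : ‖v‖ = r and c + ⟪v, u⟫ ≥ 0} is nonempty, compact, and contractible (with the subspace topology). -/

import Mathlib

open scoped RealInnerProductSpace

set_option maxHeartbeats 1000000 in
lemma cap_key_ineq {E : Type*} [NormedAddCommGroup E] [InnerProductSpace ℝ E]
    (u : E) (hu : u ≠ 0) (r : ℝ) (hr : 0 < r) (v : E) (hv : ‖v‖ = r)
    (t : ℝ) (ht0 : 0 ≤ t) (ht1 : t ≤ 1) :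
    ⟪v, u⟫ * ‖(1 - t) • v + t • ((r / ‖u‖) • u)‖ ≤
      r * ⟪(1 - t) • v + t • ((r / ‖u‖) • u), u⟫ := by
  set n := ‖u‖ with hn_def
  have hn : 0 < n := norm_pos_iff.mpr hu
  set a := ⟪v, u⟫ with ha_def
  set p := (r / n) • u with hp_def
  set w := (1 - t) • v + t • p with hw_def
  have hpu : ⟪p, u⟫ = r * n := by
    rw [hp_def, real_inner_smul_left, real_inner_self_eq_norm_mul_norm, ← hn_def]
    field_simp
  have hvp : ⟪v, p⟫ = (r / n) * a := by
    rw [hp_def, real_inner_smul_right]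
  have hwu : ⟪w, u⟫ = (1 - t) * a + t * (r * n) := by
    rw [hw_def, inner_add_left, real_inner_smul_left, real_inner_smul_left, hpu]
  have ha : |a| ≤ r * n := by
    calc |a| ≤ ‖v‖ * ‖u‖ := abs_real_inner_le_norm v u
    _ = r * n := by rw [hv, ← hn_def]
  have hpn : ‖p‖ = r := by
    rw [hp_def, norm_smul, Real.norm_eq_abs, abs_div, abs_of_pos hr, ← hn_def,
      abs_of_pos hn]
    field_simp
  set K := ‖w‖ with hK_def
  have hK0 : 0 ≤ K := norm_nonneg _
  have hKr : K ≤ r := by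
    calc K ≤ ‖(1 - t) • v‖ + ‖t • p‖ := norm_add_le _ _
    _ = (1 - t) * r + t * r := by
        rw [norm_smul, norm_smul, Real.norm_eq_abs, Real.norm_eq_abs,
          abs_of_nonneg (by linarith), abs_of_nonneg ht0, hv, hpn]
    _ = r := by ring
  have hK2 : K ^ 2 * n = r ^ 2 * n * (1 - 2 * t + 2 * t ^ 2) + 2 * t * (1 - t) * r * a := by
    have h1 : K ^ 2 = ‖(1 - t) • v‖ ^ 2 + 2 * ⟪(1 - t) • v, t • p⟫ + ‖t • p‖ ^ 2 := by
      rw [hK_def, hw_def]; exact norm_add_sq_real _ _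
    rw [real_inner_smul_left, real_inner_smul_right, hvp, norm_smul, norm_smul, hv, hpn,
      Real.norm_eq_abs, Real.norm_eq_abs, abs_of_nonneg (by linarith : (0:ℝ) ≤ 1 - t),
      abs_of_nonneg ht0] at h1
    rw [h1]; field_simp; ring
  rw [hwu]
  clear_value a n w p K
  rcases le_or_gt 0 a with hA | hA
  · have h1 : a * K ≤ a * r := mul_le_mul_of_nonneg_left hKr hA
    have h2 : a ≤ r * n := le_of_abs_le ha
    nlinarith [mul_nonneg ht0 (sub_nonneg.mpr h2)]
  · rcases le_or_gt 0 ((1 - t) * a + t * (r * n)) with hX | hX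
    · have h1 : a * K ≤ 0 := mul_nonpos_of_nonpos_of_nonneg hA.le hK0
      nlinarith
    · have ha2 : a ^ 2 ≤ r ^ 2 * n ^ 2 := by nlinarith [abs_nonneg a, le_of_abs_le ha, neg_abs_le a]
      have ht1' : t < 1 := by
        rcases lt_or_eq_of_le ht1 with h | h
        · exact h
        · exfalso; rw [h] at hX; nlinarith
      have hfac : t * r * n + 2 * (1 - t) * a < 0 := by nlinarith
      have hid : n * (a * K) ^ 2 - n * (r * ((1 - t) * a + t * (r * n))) ^ 2 =
          t * r * (a ^ 2 - r ^ 2 * n ^ 2) * (t * r * n + 2 * (1 - t) * a) := by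
        linear_combination a ^ 2 * hK2
      have hsq : (r * ((1 - t) * a + t * (r * n))) ^ 2 ≤ (a * K) ^ 2 := by
        nlinarith [hid, mul_nonneg (mul_nonneg ht0 hr.le)
          (mul_nonneg (by nlinarith : (0:ℝ) ≤ r ^ 2 * n ^ 2 - a ^ 2)
            (by linarith : (0:ℝ) ≤ -(t * r * n + 2 * (1 - t) * a)))]
      have haK : a * K ≤ 0 := mul_nonpos_of_nonpos_of_nonneg hA.le hK0
      have hrX : r * ((1 - t) * a + t * (r * n)) < 0 := mul_neg_of_pos_of_neg hr hX
      nlinarith [hsq, haK, hrX]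
open scoped RealInnerProductSpace

/-- Let `E` be a nontrivial finite-dimensional real inner product space, `u ∈ E` nonzero,
`r > 0`, and `c ∈ ℝ` with `|c| < r·‖u‖`. Then the closed spherical cap
`{v : ‖v‖ = r ∧ c + ⟪v, u⟫ ≥ 0}` is nonempty, compact, and contractible. -/
theorem spherical_cap_compact_contractible (E : Type*) [NormedAddCommGroup E]
    [InnerProductSpace ℝ E] [FiniteDimensional ℝ E] [Nontrivial E]
    (u : E) (hu : u ≠ 0) (r : ℝ) (hr : 0 < r) (c : ℝ) (hc : |c| < r * ‖u‖) :
    ({v : E | ‖v‖ = r ∧ 0 ≤ c + ⟪v, u⟫}).Nonempty ∧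
    IsCompact {v : E | ‖v‖ = r ∧ 0 ≤ c + ⟪v, u⟫} ∧
    ContractibleSpace {v : E | ‖v‖ = r ∧ 0 ≤ c + ⟪v, u⟫} := by
  have hn : 0 < ‖u‖ := norm_pos_iff.mpr hu
  set S : Set E := {v : E | ‖v‖ = r ∧ 0 ≤ c + ⟪v, u⟫} with hS_def
  set p : E := (r / ‖u‖) • u with hp_def
  have hpn : ‖p‖ = r := by
    rw [hp_def, norm_smul, Real.norm_eq_abs, abs_div, abs_of_pos hr, abs_of_pos hn]
    field_simp
  have hpu : ⟪p, u⟫ = r * ‖u‖ := by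
    rw [hp_def, real_inner_smul_left, real_inner_self_eq_norm_mul_norm]
    field_simp
  have hpS : p ∈ S := by
    refine ⟨hpn, ?_⟩
    rw [hpu]
    have := neg_abs_le c
    linarith
  -- the homotopy's moving point is nonzero
  have hwne : ∀ (t : ℝ), 0 ≤ t → t ≤ 1 → ∀ v ∈ S, (1 - t) • v + t • p ≠ 0 := by
    intro t ht0 ht1 v hv h0
    have h1 : (1 - t) • v = -(t • p) := by
      rw [add_eq_zero_iff_eq_neg] at h0; exact h0
    have h2 : (1 - t) * r = t * r := by
      have := congrArg norm h1
      rwa [norm_smul, norm_neg, norm_smul, Real.norm_eq_abs, Real.norm_eq_abs,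
        abs_of_nonneg (by linarith), abs_of_nonneg ht0, hv.1, hpn] at this
    have ht : t = 1 / 2 := by
      have : (1 - 2 * t) * r = 0 := by ring_nf; linarith
      rcases mul_eq_zero.mp this with h | h
      · linarith
      · exact absurd h (ne_of_gt hr)
    have hvp : v = -p := by
      rw [ht] at h1
      have := congrArg (fun x : E => (2 : ℝ) • x) h1
      simpa [smul_smul, smul_neg, show (2:ℝ) * (1 - 2⁻¹) = 1 by norm_num] using this
    have := hv.2
    rw [hvp, inner_neg_left, hpu] at this
    have hcl : c < r * ‖u‖ := lt_of_le_of_lt (le_abs_self c) hc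
    linarith
  refine ⟨⟨p, hpS⟩, ?_, ?_⟩
  · -- compactness
    apply (isCompact_sphere (0 : E) r).of_isClosed_subset
    · have h1 : IsClosed {v : E | ‖v‖ = r} := isClosed_eq continuous_norm continuous_const
      have h2 : IsClosed {v : E | 0 ≤ c + ⟪v, u⟫} := isClosed_le continuous_const
        (continuous_const.add (Continuous.inner continuous_id continuous_const))
      exact h1.inter h2
    · intro v hv
      simpa [mem_sphere_iff_norm] using hv.1
  · -- contractibility
    rw [contractible_iff_id_nullhomotopic]
    -- membership preservation
    have hmem : ∀ (t : ℝ), 0 ≤ t → t ≤ 1 → ∀ v ∈ S,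
        (r / ‖(1 - t) • v + t • p‖) • ((1 - t) • v + t • p) ∈ S := by
      intro t ht0 ht1 v hv
      have hw : (1 - t) • v + t • p ≠ 0 := hwne t ht0 ht1 v hv
      have hwpos : 0 < ‖(1 - t) • v + t • p‖ := norm_pos_iff.mpr hw
      constructor
      · rw [norm_smul, Real.norm_eq_abs, abs_of_pos (div_pos hr hwpos)]
        field_simp
      · have hkey : ⟪v, u⟫ * ‖(1 - t) • v + t • p‖ ≤ r * ⟪(1 - t) • v + t • p, u⟫ :=
          cap_key_ineq u hu r hr v hv.1 t ht0 ht1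
        have h3 : ⟪v, u⟫ ≤ (r / ‖(1 - t) • v + t • p‖) * ⟪(1 - t) • v + t • p, u⟫ := by
          rw [div_mul_eq_mul_div, le_div_iff₀ hwpos]
          linarith
        rw [real_inner_smul_left]
        have := hv.2
        linarith
    refine ⟨⟨p, hpS⟩, ⟨?_⟩⟩
    refine ⟨⟨fun q : unitInterval × S =>
        ⟨(r / ‖(1 - (q.1 : ℝ)) • (q.2 : E) + (q.1 : ℝ) • p‖) •
          ((1 - (q.1 : ℝ)) • (q.2 : E) + (q.1 : ℝ) • p),
          hmem _ q.1.2.1 q.1.2.2 _ q.2.2⟩, ?_⟩, ?_, ?_⟩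
    · -- continuity
      apply Continuous.subtype_mk
      have hW : Continuous (fun q : unitInterval × S =>
          (1 - (q.1 : ℝ)) • (q.2 : E) + (q.1 : ℝ) • p) := by
        apply Continuous.add
        · exact (continuous_const.sub
            (continuous_subtype_val.comp continuous_fst)).smul
            (continuous_subtype_val.comp continuous_snd)
        · exact (continuous_subtype_val.comp continuous_fst).smul continuous_const
      exact (continuous_const.div (continuous_norm.comp hW)
        (fun q => ne_of_gt (norm_pos_iff.mpr
          (hwne _ q.1.2.1 q.1.2.2 _ q.2.2)))).smul hW
    · -- at time 0
      intro x
      apply Subtype.ext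
      simp only [ContinuousMap.id_apply]
      have hx : ‖(x : E)‖ = r := x.2.1
      have h0 : ((0 : unitInterval) : ℝ) = 0 := rfl
      simp only [h0, sub_zero, one_smul, zero_smul, add_zero, hx]
      rw [div_self (ne_of_gt hr), one_smul]
    · -- at time 1
      intro x
      apply Subtype.ext
      have h1 : ((1 : unitInterval) : ℝ) = 1 := rfl
      simp only [h1, sub_self, zero_smul, one_smul, zero_add, hpn,
        ContinuousMap.const_apply]
      rw [div_self (ne_of_gt hr), one_smul]
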